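/- For every chord diagram D with n chords, the coefficient of λ^n in the polynomial W_J(D) equals Per(IM(D)), the permanent of the intersection matrix of D. -/
import Mathlib


open Finset

/-! ### Permanents -/

/-- The permanent of a square matrix. -/
noncomputable def perm {ι R : Type*} [Fintype ι] [DecidableEq ι] [CommRing R]
    (M : Matrix ι ι R) : R :=
  ∑ σ : Equiv.Perm ι, ∏ i, M i (σ i)

/-! ### Chord diagrams -/

/-- A chord diagram with `n` chords: a partition of `{1,…,2n}` into `n` two-element
subsets (chords), each recorded by its left endpoint `l i` and right endpoint `r i`,
with the chords numbered in increasing order of their left endpoints. -/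
structure ChordDiagram (n : ℕ) where
  l : Fin n → Fin (2 * n)
  r : Fin n → Fin (2 * n)
  lr : ∀ i, l i < r i
  mono : StrictMono l
  cover : ∀ q : Fin (2 * n), ∃! i : Fin n, l i = q ∨ r i = q

namespace ChordDiagram

variable {n : ℕ}

/-- Chords `i` and `j` intersect. -/
abbrev Intersect (D : ChordDiagram n) (i j : Fin n) : Prop :=
  (D.l i < D.l j ∧ D.l j < D.r i ∧ D.r i < D.r j) ∨
  (D.l j < D.l i ∧ D.l i < D.r j ∧ D.r j < D.r i)

/-- Chord `i` is completely contained in chord `j`. -/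
abbrev Contained (D : ChordDiagram n) (i j : Fin n) : Prop :=
  D.l j < D.l i ∧ D.r i < D.r j

/-- The five colors `I, B⁺₀, B⁺₁, B⁻₀, B⁻₁` (`true` encodes subscript `1`). -/
inductive JCol where
  | I : JCol
  | Bp : Bool → JCol
  | Bm : Bool → JCol
  deriving DecidableEq, Fintype

/-- The contribution `δ` of a left endpoint of a chord with a given color. -/
def lsign : JCol → ℤ
  | .Bp true => 1
  | .Bm true => -1
  | _ => 0

/-- `δ(q)` for a coloring `ρ` of the chords of `D`. -/
def delta (D : ChordDiagram n) (ρ : Fin n → JCol) (q : Fin (2 * n)) : ℤ :=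
  ∑ v : Fin n, ((if D.l v = q then lsign (ρ v) else 0) +
                (if D.r v = q then - lsign (ρ v) else 0))

/-- `Σ_{q < p} δ(q)`. -/
def kOf (D : ChordDiagram n) (ρ : Fin n → JCol) (p : Fin (2 * n)) : ℤ :=
  ∑ q ∈ univ.filter (fun q => q < p), D.delta ρ q

/-- The weight `ω_ρ(v)` of chord `v` under the coloring `ρ`. -/
noncomputable def omega (D : ChordDiagram n) (ρ : Fin n → JCol) (v : Fin n) :
    Polynomial ℚ :=
  match ρ v with
  | .I => Polynomial.X + 2
  | .Bp ε => - (-1 : Polynomial ℚ) ^ (if ε then 1 else 0) *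
      (1 + ((D.kOf ρ (D.l v) : ℤ) : Polynomial ℚ)) *
      (Polynomial.X + 1 - ((D.kOf ρ (D.r v) : ℤ) : Polynomial ℚ))
  | .Bm ε => - (-1 : Polynomial ℚ) ^ (if ε then 1 else 0) *
      (1 + ((D.kOf ρ (D.r v) : ℤ) : Polynomial ℚ)) *
      (Polynomial.X + 1 - ((D.kOf ρ (D.l v) : ℤ) : Polynomial ℚ))

/-- The colored Jones weight system `W_J(D) ∈ ℚ[λ]` (with `λ = X`). -/
noncomputable def WJ (D : ChordDiagram n) : Polynomial ℚ :=
  ∑ ρ : Fin n → JCol, ∏ v : Fin n, D.omega ρ v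

/-- The intersection matrix `IM(D)` with entries `sign(i−j)` for intersecting chords. -/
def IM (D : ChordDiagram n) : Matrix (Fin n) (Fin n) ℚ := fun i j =>
  if D.Intersect i j then (if j < i then 1 else if i < j then -1 else 0) else 0

/-- The `3×3` block `A₀`. -/
noncomputable def A0 : Matrix (Fin 3) (Fin 3) (Polynomial ℚ) :=
  !![Polynomial.X + 2, 0, 0; 0, Polynomial.X + 2, 1; Polynomial.X, -Polynomial.X - 2, 1]

/-- The `3×3` block `A₊`. -/
noncomputable def Aplus : Matrix (Fin 3) (Fin 3) (Polynomial ℚ) := !![1, 1, 0; 0, 0, 0; 0, 0, 0]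

/-- The `3×3` block `A₋`. -/
noncomputable def Aminus : Matrix (Fin 3) (Fin 3) (Polynomial ℚ) := !![0, 0, 0; -1, -1, 0; 0, 0, 0]

/-- The `3×3` block `A_c`. -/
noncomputable def Acont : Matrix (Fin 3) (Fin 3) (Polynomial ℚ) := !![1, 1, 0; -1, -1, 0; 0, 0, 0]

/-- The blown-up intersection matrix `IM_J(D)`, a `3n×3n` matrix of `3×3` blocks. -/
noncomputable def IMJ (D : ChordDiagram n) :
    Matrix (Fin n × Fin 3) (Fin n × Fin 3) (Polynomial ℚ) := fun p q =>
  (if p.1 = q.1 then A0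
   else if q.1 < p.1 ∧ D.Intersect p.1 q.1 then Aplus
   else if p.1 < q.1 ∧ D.Intersect p.1 q.1 then Aminus
   else if ¬ D.Intersect p.1 q.1 ∧ D.Contained p.1 q.1 then Acont
   else 0) p.2 q.2

end ChordDiagram

/-! ### Looped digraphs -/

/-- A looped digraph: a finite digraph (arcs a set of ordered pairs) with a loop at
every vertex and a distinguished set of red non-loop arcs. -/
structure LoopedDigraph (V : Type*) [Fintype V] [DecidableEq V] where
  arcs : Finset (V × V)
  red : Finset (V × V)
  loop_mem : ∀ v : V, (v, v) ∈ arcs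
  red_sub : red ⊆ arcs
  red_no_loop : ∀ v : V, (v, v) ∉ red

/-- A thickened arc `(e, b)`, where `e` is an arc of the digraph and `b : Bool` records:
for an uncolored arc, whether it is thickened at its tail (`true`) or head (`false`);
for a red arc (always thickened at its tail `e.1`), whether it keeps its original
orientation (`true`) or is reversed (`false`). Loops always carry `b = true`. -/
abbrev TArc (V : Type*) := (V × V) × Bool

variable {V : Type*} [Fintype V] [DecidableEq V]

/-- The degree of `v` in a collection `K` of thickened arcs: the number of arc-ends of
`K` at `v` (a loop contributing `2`). -/
def degAt (K : Finset (TArc V)) (v : V) : ℕ :=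
  ∑ t ∈ K, ((if t.1.1 = v then 1 else 0) + (if t.1.2 = v then 1 else 0))

/-- `deg₄(K)`: the number of vertices of degree `4` in `K`. -/
def deg4 (K : Finset (TArc V)) : ℕ := (univ.filter fun v => degAt K v = 4).card

namespace LoopedDigraph

variable (G : LoopedDigraph V)

/-- The initial vertex of a thickened arc, as oriented in the collection. -/
def src (t : TArc V) : V := if t.1 ∈ G.red ∧ t.2 = false then t.1.2 else t.1.1

/-- The terminal vertex of a thickened arc, as oriented in the collection. -/
def dst (t : TArc V) : V := if t.1 ∈ G.red ∧ t.2 = false then t.1.1 else t.1.2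

/-- The vertex at which a thickened arc is thickened. -/
def tvert (t : TArc V) : V := if t.1 ∈ G.red then t.1.1 else if t.2 then t.1.1 else t.1.2

/-- The number of arcs of `K` thickened at `v`. -/
def thickAt (K : Finset (TArc V)) (v : V) : ℕ := (K.filter fun t => G.tvert t = v).card

/-- The number of arcs of `K` thickened at `v` that leave `v` (a loop counting as
leaving). -/
def outThickAt (K : Finset (TArc V)) (v : V) : ℕ :=
  (K.filter fun t => G.tvert t = v ∧ G.src t = v).card

/-- An acceptable object for a looped digraph. -/
structure IsAcceptable (K : Finset (TArc V)) : Prop where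
  mem_arcs : ∀ t ∈ K, t.1 ∈ G.arcs
  loop_thick : ∀ t ∈ K, t.1.1 = t.1.2 → t.2 = true
  deg024 : ∀ v, degAt K v = 0 ∨ degAt K v = 2 ∨ degAt K v = 4
  half_thick : ∀ v, 2 * G.thickAt K v = degAt K v
  balance : ∀ v, G.thickAt K v = 2 → G.outThickAt K v = 1

/-- `a(K)`: the number of arcs of `K` thickened at their initial vertex (loops count). -/
def aK (K : Finset (TArc V)) : ℕ := (K.filter fun t => G.src t = G.tvert t).card

open Classical in
/-- The partition function `J(G)`, with `λ ↦ lam` and `x_e ↦ x e`. -/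
noncomputable def J {R : Type*} [CommRing R] (lam : R) (x : V × V → R) : R :=
  ∑ K : Finset (TArc V),
    if G.IsAcceptable K then
      2 ^ deg4 K * (lam + 2) ^ (Fintype.card V - deg4 K) *
        (∏ t ∈ K, x t.1) * (-1 : R) ^ G.aK K
    else 0

/-- `s(w) = δ_w · ε_w` for a partial coloring `c` (with support the set `V′`). -/
def sInt (c : V → Option (Bool × Bool)) (w : V) : ℤ :=
  match c w with
  | none => 0
  | some (δ, ε) => (if δ then 1 else -1) * (if ε then 1 else 0)

/-- `z_v(e)` (for `bar = false`) and `z̄_v(e)` (for `bar = true`). -/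
def zfun {R : Type*} [CommRing R] (x : V × V → R) (c : V → Option (Bool × Bool))
    (bar : Bool) (v : V) (e : V × V) : R :=
  match c v with
  | none => 0
  | some (δ, _) =>
    if e ∈ G.red then
      (if e.1 = v then ((sInt c e.2 : ℤ) : R) * x e else 0)
    else if e.1 = v then (if δ = bar then ((sInt c e.2 : ℤ) : R) * x e else 0)
    else if e.2 = v then (if δ ≠ bar then ((sInt c e.1 : ℤ) : R) * x e else 0)
    else 0

/-- The weight `ω′_c(v)`. -/
noncomputable def omegaC {R : Type*} [CommRing R] (lam : R) (x : V × V → R)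
    (c : V → Option (Bool × Bool)) (v : V) : R :=
  match c v with
  | none => 0
  | some (_, ε) =>
    - (-1 : R) ^ (if ε then 1 else 0) *
      (1 + ∑ e ∈ G.arcs, G.zfun x c false v e) *
      (lam + 1 - ∑ e ∈ G.arcs, G.zfun x c true v e)

/-- The state sum `J′(G)`: the sum over `V′ ⊆ V` and colorings `c` of `V′` is encoded
as a sum over partial colorings `c : V → Option (Bool × Bool)` with support `V′`. -/
noncomputable def J' {R : Type*} [CommRing R] (lam : R) (x : V × V → R) : R :=
  ∑ c : V → Option (Bool × Bool),
    (lam + 2) ^ (univ.filter fun v => c v = none).card *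
      ∏ v ∈ univ.filter (fun v => (c v).isSome = true), G.omegaC lam x c v

end LoopedDigraph

/-! ### The labeled intersection digraph of a chord diagram -/

open ChordDiagram in
/-- The labeled intersection digraph `LID(D)` of a chord diagram `D`. -/
def LID {n : ℕ} (D : ChordDiagram n) : LoopedDigraph (Fin n) where
  arcs := univ.filter fun p : Fin n × Fin n =>
    p.1 = p.2 ∨ (p.1 < p.2 ∧ D.Intersect p.1 p.2) ∨ D.Contained p.1 p.2
  red := univ.filter fun p : Fin n × Fin n => D.Contained p.1 p.2
  loop_mem := by intro v; simp
  red_sub := by intro p hp; simp only [mem_filter, mem_univ, true_and] at hp ⊢; tauto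
  red_no_loop := by
    intro v hv
    simp only [mem_filter, mem_univ, true_and] at hv
    exact lt_irrefl _ hv.1

/-! ### The data `(V′, h)` and the state sum `A(V′, h)` -/

/-- The data of a function `h` assigning to every `v ∈ V′` a set of at most two arcs of
`G` incident with `v`, every red arc of `h v` leaving `v` (and `h v = ∅` off `V′`). -/
structure HData (G : LoopedDigraph V) (V' : Finset V) where
  h : V → Finset (V × V)
  sub : ∀ v, h v ⊆ G.arcs
  card_le : ∀ v, (h v).card ≤ 2
  incident : ∀ v, ∀ e ∈ h v, e.1 = v ∨ e.2 = v
  red_out : ∀ v, ∀ e ∈ h v, e ∈ G.red → e.1 = v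
  outside : ∀ v, v ∉ V' → h v = ∅

/-- The number of arc-ends at `v` among a set of thickened arcs `(e, w)`. -/
def endCountAt (S : Finset ((V × V) × V)) (v : V) : ℕ :=
  ∑ p ∈ S, ((if p.1.1 = v then 1 else 0) + (if p.1.2 = v then 1 else 0))

namespace HData

variable {G : LoopedDigraph V} {V' : Finset V} (H : HData G V')

/-- `W₁ = {v ∈ V′ : |h(v)| = 2}`. -/
def W1 : Finset V := V'.filter fun v => (H.h v).card = 2

/-- `W₂ = {v ∈ V′ : |h(v)| ≥ 1}`. -/
def W2 : Finset V := V'.filter fun v => 1 ≤ (H.h v).card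

/-- `h(W₂)`: the set of thickened arcs `(e, v)` with `v ∈ W₂` and `e ∈ h v`. -/
def hW2 : Finset ((V × V) × V) :=
  univ.filter fun p => p.2 ∈ H.W2 ∧ p.1 ∈ H.h p.2

/-- The functions `g` on `S` with `g v ∈ h v`, encoded as singleton-valued selections
`gs : V → Finset (V × V)` (with `gs v = ∅` off `S`). -/
def choices (S : Finset V) : Finset (V → Finset (V × V)) :=
  univ.filter fun gs => ∀ v, gs v ⊆ H.h v ∧
    (v ∈ S → (gs v).card = 1) ∧ (v ∉ S → gs v = ∅)

/-- The summand `B(c, V₂′, g)`; here `g` is encoded by the selection `gs` on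
`W₁ ∪ V₂′` and the complementary function `f` (on `W₁ ∪ V₁′`, `V₁′ = W₂∖(W₁∪V₂′)`)
is encoded by the complementary selection `h v ∖ gs v`. -/
noncomputable def Bterm {R : Type*} [CommRing R] (lam : R) (x : V × V → R)
    (c : V → Option (Bool × Bool)) (V2 : Finset V) (gs : V → Finset (V × V)) : R :=
  (-1 : R) ^ (∑ v ∈ V', ((c v).elim 0 fun p => if p.2 then 1 else 0 : ℕ)) *
  (-1 : R) ^ (H.W1 ∪ V2).card *
  (lam + 1) ^ (V' \ (H.W1 ∪ V2)).card *
  (∏ v ∈ H.W1 ∪ V2, ∏ e ∈ gs v, G.zfun x c true v e) *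
  (∏ v ∈ H.W1 ∪ (H.W2 \ (H.W1 ∪ V2)), ∏ e ∈ H.h v \ gs v, G.zfun x c false v e)

open Classical in
/-- The state sum `A(V′, h)`. -/
noncomputable def Aval {R : Type*} [CommRing R] (lam : R) (x : V × V → R) : R :=
  ∑ c : V → Option (Bool × Bool),
    if (∀ v, (c v).isSome = true ↔ v ∈ V') then
      ∑ V2 ∈ (H.W2 \ H.W1).powerset, ∑ gs ∈ H.choices (H.W1 ∪ V2),
        H.Bterm lam x c V2 gs
    else 0

end HData

/-! ### Good collections and the state sum `C(X, V′, K)` -/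

namespace LoopedDigraph

/-- A collection of thickened arcs good on `V′`. -/
structure IsGood (G : LoopedDigraph V) (V' : Finset V) (K : Finset (TArc V)) : Prop where
  mem_arcs : ∀ t ∈ K, t.1 ∈ G.arcs
  loop_thick : ∀ t ∈ K, t.1.1 = t.1.2 → t.2 = true
  red_orig : ∀ t ∈ K, t.1 ∈ G.red → t.2 = true
  deg_mem : ∀ v ∈ V', degAt K v = 2 ∨ degAt K v = 4
  deg_out : ∀ v, v ∉ V' → degAt K v = 0
  half_thick : ∀ v, 2 * G.thickAt K v = degAt K v
  unc_opp : ∀ t ∈ K, ∀ s ∈ K, t ≠ s → t.1 ∉ G.red → s.1 ∉ G.red →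
    G.tvert t = G.tvert s → ((G.src t = G.tvert t) ↔ ¬ (G.src s = G.tvert s))

/-- The set `W₁` of degree-4 vertices of a collection `K`. -/
def KW1 (G : LoopedDigraph V) (K : Finset (TArc V)) : Finset V :=
  univ.filter fun v => degAt K v = 4

/-- The arcs of `K` thickened at `v`. -/
def thickedAt (G : LoopedDigraph V) (K : Finset (TArc V)) (v : V) : Finset (TArc V) :=
  K.filter fun t => G.tvert t = v

/-- The functions `g′` assigning to each degree-4 vertex one of the two arcs of `K`
thickened at it, encoded as singleton-valued selections. -/
def kchoices (G : LoopedDigraph V) (K : Finset (TArc V)) : Finset (V → Finset (TArc V)) :=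
  univ.filter fun cs => ∀ v, cs v ⊆ G.thickedAt K v ∧
    (v ∈ KW1 G K → (cs v).card = 1) ∧ (v ∉ KW1 G K → cs v = ∅)

open Classical in
/-- The state sum `C(X, V′, K)`. -/
noncomputable def Cval {R : Type*} [CommRing R] (G : LoopedDigraph V) (V' : Finset V)
    (K : Finset (TArc V)) (X : Finset V) (x : V × V → R) : R :=
  ∑ cs ∈ kchoices G K,
    (-1 : R) ^ (KW1 G K).card * (-1 : R) ^ X.card *
    ∑ c : V → Option (Bool × Bool),
      if (∀ v, (c v).isSome = true ↔ v ∈ V') then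
        (∏ v ∈ KW1 G K ∪ X,
          ∏ t ∈ (if v ∈ KW1 G K then cs v else G.thickedAt K v), G.zfun x c true v t.1) *
        (∏ v ∈ V' \ X, ∏ t ∈ G.thickedAt K v \ cs v, G.zfun x c false v t.1)
      else 0

/-- A connected acceptable object: one with no single loops. -/
def IsConnectedObj (G : LoopedDigraph V) (K : Finset (TArc V)) : Prop :=
  G.IsAcceptable K ∧ ∀ t ∈ K, t.1.1 = t.1.2 → degAt K t.1.1 ≠ 2

/-- A super acceptable object: connected, and every vertex has degree at least 2. -/
def IsSuper (G : LoopedDigraph V) (K : Finset (TArc V)) : Prop :=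
  G.IsConnectedObj K ∧ ∀ v, 2 ≤ degAt K v

end LoopedDigraph
section WJaux

open ChordDiagram Polynomial

namespace WJaux

variable {n : ℕ} (D : ChordDiagram n)

lemma r_inj {u v : Fin n} (h : D.r u = D.r v) : u = v := by
  obtain ⟨i, _, hu⟩ := D.cover (D.r v)
  exact (hu u (Or.inr h)).trans (hu v (Or.inr rfl)).symm

lemma l_ne_r (u v : Fin n) : D.l u ≠ D.r v := by
  intro h
  obtain ⟨i, _, hu⟩ := D.cover (D.r v)
  have huv : u = v := (hu u (Or.inl h)).trans (hu v (Or.inr rfl)).symm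
  subst huv
  have := D.lr u
  rw [h] at this
  exact lt_irrefl _ this

/-- The sign of a color. -/
def sgnQ : JCol → ℚ := fun s => ((lsign s : ℤ) : ℚ)

/-- `-(-1)^ε`. -/
def sgnE (ε : Bool) : ℚ := -(-1 : ℚ) ^ (if ε then 1 else 0)

/-- Indicator that chord `u` covers (weakly, on the right) the point `p`. -/
def covQ (u : Fin n) (p : Fin (2 * n)) : ℚ := if D.l u < p ∧ p ≤ D.r u then 1 else 0

/-- The pieces of the top coefficient of `ω_ρ(v)`. -/
def cpart (s : JCol) (v : Fin n) : Option (Fin n) → ℚ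
  | none =>
    match s with
    | .I => 1
    | .Bp ε => sgnE ε
    | .Bm ε => sgnE ε * (1 + sgnQ (.Bm ε))
  | some u =>
    match s with
    | .I => 0
    | .Bp ε => sgnE ε * covQ D u (D.l v)
    | .Bm ε => sgnE ε * (if u = v then 0 else covQ D u (D.r v))

/-- The top (`λ`-)coefficient of `ω_ρ(v)`. -/
def leadQ (ρ : Fin n → JCol) (v : Fin n) : ℚ :=
  match ρ v with
  | .I => 1
  | .Bp ε => sgnE ε * (1 + ((D.kOf ρ (D.l v) : ℤ) : ℚ))
  | .Bm ε => sgnE ε * (1 + ((D.kOf ρ (D.r v) : ℤ) : ℚ))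

/-- The constant coefficient of `ω_ρ(v)`. -/
def cstQ (ρ : Fin n → JCol) (v : Fin n) : ℚ :=
  match ρ v with
  | .I => 2
  | .Bp ε => sgnE ε * (1 + ((D.kOf ρ (D.l v) : ℤ) : ℚ)) * (1 - ((D.kOf ρ (D.r v) : ℤ) : ℚ))
  | .Bm ε => sgnE ε * (1 + ((D.kOf ρ (D.r v) : ℤ) : ℚ)) * (1 - ((D.kOf ρ (D.l v) : ℤ) : ℚ))

lemma sum_JCol (g : JCol → ℚ) :
    ∑ s : JCol, g s = g .I + g (.Bp false) + g (.Bp true) + g (.Bm false) + g (.Bm true) := by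
  rw [show (univ : Finset JCol) = {.I, .Bp false, .Bp true, .Bm false, .Bm true} from by decide]
  rw [Finset.sum_insert (by decide), Finset.sum_insert (by decide),
    Finset.sum_insert (by decide), Finset.sum_insert (by decide), Finset.sum_singleton]
  ring

lemma kOf_eq (ρ : Fin n → JCol) (p : Fin (2 * n)) :
    ((D.kOf ρ p : ℤ) : ℚ) = ∑ u, sgnQ (ρ u) * covQ D u p := by
  rw [ChordDiagram.kOf]
  push_cast [ChordDiagram.delta, apply_ite (fun z : ℤ => (z : ℚ))]
  rw [Finset.sum_comm]
  refine Finset.sum_congr rfl fun u _ => ?_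
  rw [Finset.sum_add_distrib, Finset.sum_ite_eq, Finset.sum_ite_eq]
  simp only [Finset.mem_filter, Finset.mem_univ, true_and, sgnQ, covQ]
  split_ifs with h1 h2 h3 h3 h2 h3 h3
  · exact absurd (lt_of_le_of_lt h3.2 h2) (lt_irrefl _)
  · ring
  · ring
  · exact absurd ⟨h1, le_of_not_gt h2⟩ h3
  · exact absurd (lt_trans (D.lr u) h2) h1
  · exact absurd (lt_trans (D.lr u) h2) h1
  · exact absurd h3.1 h1
  · ring

lemma lead_eq_sum (ρ : Fin n → JCol) (v : Fin n) :
    leadQ D ρ v = ∑ j : Option (Fin n), cpart D (ρ v) v j * (j.elim 1 fun u => sgnQ (ρ u)) := by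
  rw [Fintype.sum_option]
  cases h : ρ v with
  | I => simp [cpart, leadQ, h]
  | Bp ε =>
    simp only [cpart, leadQ, h, Option.elim, mul_one]
    rw [kOf_eq, mul_add, mul_one, Finset.mul_sum]
    congr 1
    exact Finset.sum_congr rfl fun u _ => by ring
  | Bm ε =>
    simp only [cpart, leadQ, h, Option.elim, mul_one]
    rw [kOf_eq]
    have hsum : (∑ u, sgnQ (ρ u) * covQ D u (D.r v))
        = sgnQ (ρ v) + ∑ u, sgnQ (ρ u) * (if u = v then 0 else covQ D u (D.r v)) := by
      have hsplit : ∀ u : Fin n,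
          sgnQ (ρ u) * covQ D u (D.r v)
          = (if u = v then sgnQ (ρ u) else 0)
            + sgnQ (ρ u) * (if u = v then 0 else covQ D u (D.r v)) := by
        intro u
        by_cases hu : u = v
        · subst hu
          have hc : covQ D u (D.r u) = 1 := by simp [covQ, D.lr u]
          simp [hc]
        · simp [hu]
      rw [Finset.sum_congr rfl fun u _ => hsplit u, Finset.sum_add_distrib,
        Finset.sum_ite_eq' univ v (fun u => sgnQ (ρ u))]
      simp
    rw [hsum, h, mul_add, mul_one, mul_add, Finset.mul_sum, ← add_assoc]
    congr 1
    · ring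
    exact Finset.sum_congr rfl fun u _ => by ring

lemma omega_eq (ρ : Fin n → JCol) (v : Fin n) :
    D.omega ρ v = C (leadQ D ρ v) * X + C (cstQ D ρ v) := by
  cases h : ρ v with
  | I =>
    simp only [ChordDiagram.omega, h, leadQ, cstQ, map_one, one_mul, map_ofNat]
  | Bp ε =>
    simp only [ChordDiagram.omega, h, leadQ, cstQ, sgnE]
    rw [show ((D.kOf ρ (D.l v) : ℤ) : ℚ[X]) = C ((D.kOf ρ (D.l v) : ℤ) : ℚ) from
        (C_eq_intCast _).symm,
      show ((D.kOf ρ (D.r v) : ℤ) : ℚ[X]) = C ((D.kOf ρ (D.r v) : ℤ) : ℚ) from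
        (C_eq_intCast _).symm]
    cases ε <;>
      simp only [if_true, if_false, pow_one, pow_zero, map_mul, map_add, map_sub,
        map_neg, map_one, Bool.false_eq_true] <;> ring
  | Bm ε =>
    simp only [ChordDiagram.omega, h, leadQ, cstQ, sgnE]
    rw [show ((D.kOf ρ (D.l v) : ℤ) : ℚ[X]) = C ((D.kOf ρ (D.l v) : ℤ) : ℚ) from
        (C_eq_intCast _).symm,
      show ((D.kOf ρ (D.r v) : ℤ) : ℚ[X]) = C ((D.kOf ρ (D.r v) : ℤ) : ℚ) from
        (C_eq_intCast _).symm]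
    cases ε <;>
      simp only [if_true, if_false, pow_one, pow_zero, map_mul, map_add, map_sub,
        map_neg, map_one, Bool.false_eq_true] <;> ring


lemma coeff_prod_linear {ι : Type*} [DecidableEq ι] (s : Finset ι) (a b : ι → ℚ) :
    (∏ i ∈ s, (C (a i) * X + C (b i))).coeff s.card = ∏ i ∈ s, a i := by
  induction s using Finset.cons_induction with
  | empty => rw [Finset.prod_empty, Finset.prod_empty, Finset.card_empty, Polynomial.coeff_one_zero]
  | cons i s hi ih =>
    rw [Finset.prod_cons, Finset.prod_cons, Finset.card_cons]
    have hdeg : (∏ j ∈ s, (C (a j) * X + C (b j))).natDegree ≤ s.card := by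
      refine le_trans (Polynomial.natDegree_prod_le s _) ?_
      refine le_trans (Finset.sum_le_sum fun j _ => ?_) (le_of_eq (by rw [Finset.sum_const, smul_eq_mul, mul_one]))
      · show (C (a j) * X + C (b j)).natDegree ≤ 1
        refine le_trans (Polynomial.natDegree_add_le _ _) ?_
        simp only [max_le_iff]
        constructor
        · exact le_trans (Polynomial.natDegree_C_mul_le _ _) Polynomial.natDegree_X_le
        · simp
    rw [add_mul, Polynomial.coeff_add, mul_assoc, Polynomial.coeff_C_mul,
      Polynomial.coeff_X_mul, Polynomial.coeff_C_mul, ih,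
      Polynomial.coeff_eq_zero_of_natDegree_lt (lt_of_le_of_lt hdeg (Nat.lt_succ_self _))]
    ring


lemma coeff_WJ : D.WJ.coeff n = ∑ ρ : Fin n → JCol, ∏ v, leadQ D ρ v := by
  rw [ChordDiagram.WJ, Polynomial.finset_sum_coeff]
  refine Finset.sum_congr rfl fun ρ _ => ?_
  rw [Finset.prod_congr rfl fun v _ => omega_eq D ρ v]
  have h := coeff_prod_linear (univ : Finset (Fin n)) (leadQ D ρ) (cstQ D ρ)
  rwa [Finset.card_univ, Fintype.card_fin] at h


/-- Number of preimages. -/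
def mcount (f : Fin n → Option (Fin n)) (u : Fin n) : ℕ :=
  (univ.filter fun v => f v = some u).card

/-- The per-chord factor after summing over colorings. -/
def Phi (f : Fin n → Option (Fin n)) (u : Fin n) : ℚ :=
  ∑ s : JCol, cpart D s u (f u) * sgnQ s ^ mcount f u

lemma prod_elim_eq_pow (f : Fin n → Option (Fin n)) (g : Fin n → ℚ) :
    (∏ v, (f v).elim 1 g) = ∏ u, g u ^ mcount f u := by
  classical
  rw [← Finset.prod_fiberwise_of_maps_to (g := f) (t := univ)
    (fun x _ => Finset.mem_univ (f x)) (fun v => (f v).elim 1 g)]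
  rw [Fintype.prod_option]
  have hinner : ∀ j : Option (Fin n),
      (∏ v ∈ univ.filter fun v => f v = j, (f v).elim 1 g) = (j.elim 1 g) ^
        (univ.filter fun v => f v = j).card := by
    intro j
    rw [Finset.prod_congr rfl fun v hv => by
      rw [(Finset.mem_filter.mp hv).2]]
    exact Finset.prod_const _
  rw [hinner none]
  simp only [hinner]
  simp [mcount]


lemma sum_lead_eq :
    (∑ ρ : Fin n → JCol, ∏ v, leadQ D ρ v) = ∑ f : Fin n → Option (Fin n), ∏ u, Phi D f u := by
  classical
  have h1 : ∀ ρ : Fin n → JCol, (∏ v, leadQ D ρ v)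
      = ∑ f : Fin n → Option (Fin n),
          ∏ v, cpart D (ρ v) v (f v) * ((f v).elim 1 fun u => sgnQ (ρ u)) := by
    intro ρ
    rw [Finset.prod_congr rfl fun v _ => lead_eq_sum D ρ v]
    exact Fintype.prod_sum _
  rw [Finset.sum_congr rfl fun ρ _ => h1 ρ, Finset.sum_comm]
  refine Finset.sum_congr rfl fun f _ => ?_
  have h2 : ∀ ρ : Fin n → JCol,
      (∏ v, cpart D (ρ v) v (f v) * ((f v).elim 1 fun u => sgnQ (ρ u)))
      = ∏ u, (cpart D (ρ u) u (f u) * sgnQ (ρ u) ^ mcount f u) := by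
    intro ρ
    rw [Finset.prod_mul_distrib, prod_elim_eq_pow f (fun u => sgnQ (ρ u)),
      ← Finset.prod_mul_distrib]
  rw [Finset.sum_congr rfl fun ρ _ => h2 ρ]
  rw [← Fintype.prod_sum (fun u s => cpart D s u (f u) * sgnQ s ^ mcount f u)]
  rfl


lemma AB_eq_IM (w u : Fin n) :
    covQ D w (D.l u) - (if w = u then 0 else covQ D w (D.r u)) = D.IM u w := by
  rcases eq_or_ne w u with rfl | hne
  · have hI : ¬ D.Intersect w w := by
      rintro (⟨h, -⟩ | ⟨h, -⟩) <;> exact lt_irrefl _ h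
    simp [covQ, ChordDiagram.IM, hI, lt_irrefl]
  · have h1 : (D.l w : ℕ) < D.r w := D.lr w
    have h2 : (D.l u : ℕ) < D.r u := D.lr u
    have hll : (D.l w : ℕ) ≠ D.l u := fun h => hne (D.mono.injective (Fin.val_injective h))
    have hrr : (D.r w : ℕ) ≠ D.r u := fun h => hne (r_inj D (Fin.val_injective h))
    have hlr1 : (D.l w : ℕ) ≠ D.r u := fun h => l_ne_r D w u (Fin.val_injective h)
    have hlr2 : (D.l u : ℕ) ≠ D.r w := fun h => l_ne_r D u w (Fin.val_injective h)
    have hmuw : u < w ↔ (D.l u : ℕ) < D.l w := by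
      rw [← D.mono.lt_iff_lt]; exact Iff.rfl
    have hmwu : w < u ↔ (D.l w : ℕ) < D.l u := by
      rw [← D.mono.lt_iff_lt]; exact Iff.rfl
    simp only [covQ, ChordDiagram.IM, ChordDiagram.Intersect, if_neg hne]
    simp only [Fin.lt_def, Fin.le_def] at *
    split_ifs <;> first | (exfalso; omega) | norm_num


lemma Phi_some (π : Equiv.Perm (Fin n)) (u : Fin n) :
    Phi D (fun v => some (π v)) u = D.IM u (π u) := by
  classical
  have hm : mcount (fun v => some (π v)) u = 1 := by
    have hfil : (univ.filter fun v => (some (π v) : Option (Fin n)) = some u)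
        = {π.symm u} := by
      ext v
      simp [Equiv.apply_eq_iff_eq_symm_apply]
    rw [mcount]
    simp only [hfil, Finset.card_singleton]
  rw [Phi, hm, sum_JCol (fun s => cpart D s u (some (π u)) * sgnQ s ^ 1)]
  simp only [cpart, sgnQ, sgnE, ChordDiagram.lsign, pow_one]
  push_cast
  rw [← AB_eq_IM D (π u) u]
  ring


lemma Phi_concentrate (f : Fin n → Option (Fin n)) (hf : (∏ u, Phi D f u) ≠ 0) :
    ∃ π : Equiv.Perm (Fin n), (fun v => some (π v)) = f := by
  classical
  have hΦ : ∀ u, Phi D f u ≠ 0 := fun u h0 => hf (Finset.prod_eq_zero (Finset.mem_univ u) h0)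
  have hm0 : ∀ u, mcount f u ≠ 0 := by
    intro u hm
    apply hΦ u
    rw [Phi, hm]
    cases hfu : f u with
    | none =>
      rw [sum_JCol (fun s => cpart D s u none * sgnQ s ^ 0)]
      simp [cpart, sgnQ, sgnE, ChordDiagram.lsign]
    | some w =>
      rw [sum_JCol (fun s => cpart D s u (some w) * sgnQ s ^ 0)]
      simp [cpart, sgnQ, sgnE, ChordDiagram.lsign]
      split_ifs <;> ring
  have hsum : (∑ u, mcount f u) = ∑ v : Fin n, (if (f v).isSome then 1 else 0) := by
    simp only [mcount, Finset.card_filter]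
    rw [Finset.sum_comm]
    refine Finset.sum_congr rfl fun v _ => ?_
    cases hv : f v with
    | none => simp [hv]
    | some w => simp [hv, Finset.sum_ite_eq]
  have hall : ∀ v, (f v).isSome = true := by
    by_contra hc
    push_neg at hc
    obtain ⟨v₀, hv₀⟩ := hc
    have hlt : (∑ v : Fin n, (if (f v).isSome then 1 else 0)) < ∑ v : Fin n, 1 := by
      refine Finset.sum_lt_sum (fun i _ => by split_ifs <;> omega)
        ⟨v₀, Finset.mem_univ _, by simp [hv₀]⟩
    have hge : (∑ v : Fin n, 1) ≤ ∑ u, mcount f u :=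
      Finset.sum_le_sum fun u _ => Nat.one_le_iff_ne_zero.mpr (hm0 u)
    omega
  have hm1 : ∀ u, mcount f u = 1 := by
    have he : (∑ u, mcount f u) = ∑ u : Fin n, 1 := by
      rw [hsum]; exact Finset.sum_congr rfl fun v _ => by simp [hall v]
    intro u
    by_contra hu
    have hlt : (∑ u : Fin n, 1) < ∑ u, mcount f u :=
      Finset.sum_lt_sum (fun i _ => Nat.one_le_iff_ne_zero.mpr (hm0 i))
        ⟨u, Finset.mem_univ _, by have := hm0 u; omega⟩
    omega
  have hg : ∀ v, ∃ w, f v = some w := fun v => Option.isSome_iff_exists.mp (hall v)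
  choose g hgf using hg
  have hginj : Function.Injective g := by
    intro v₁ v₂ h
    have h1 : v₁ ∈ univ.filter fun v => f v = some (g v₂) := by simp [hgf v₁, h]
    have h2 : v₂ ∈ univ.filter fun v => f v = some (g v₂) := by simp [hgf v₂]
    have hc : (univ.filter fun v => f v = some (g v₂)).card ≤ 1 := le_of_eq (hm1 (g v₂))
    exact Finset.card_le_one.mp hc _ h1 _ h2
  refine ⟨Equiv.ofBijective g ((Finite.injective_iff_bijective).mp hginj), funext fun v => ?_⟩
  rw [hgf v]; rfl


end WJaux

end WJaux

/-- **Corollary (BG).** For every chord diagram `D` with `n` chords, the coefficient of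
`λ^n` in `W_J(D)` equals the permanent of the intersection matrix: `W_{JJ} = Per(IM)`. -/
theorem coeff_WJ_eq_perm_IM {n : ℕ} (D : ChordDiagram n) :
    D.WJ.coeff n = perm (ChordDiagram.IM D) := by
  classical
  rw [WJaux.coeff_WJ D, WJaux.sum_lead_eq D]
  unfold perm
  refine (Finset.sum_bij_ne_zero (fun π _ _ => fun v => some (π v)) ?_ ?_ ?_ ?_).symm
  · intro a h₁ h₂; exact Finset.mem_univ _
  · intro a₁ h₁₁ h₁₂ a₂ h₂₁ h₂₂ h
    exact Equiv.ext fun v => Option.some_injective _ (congrFun h v)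
  · intro f _ hf
    obtain ⟨π, hπ⟩ := WJaux.Phi_concentrate D f hf
    refine ⟨π, Finset.mem_univ _, ?_, hπ⟩
    rw [show (∏ i, D.IM i (π i)) = ∏ u, WJaux.Phi D f u from ?_]
    · exact hf
    · rw [← hπ]
      exact Finset.prod_congr rfl fun u _ => (WJaux.Phi_some D π u).symm
  · intro π h₁ h₂
    exact Finset.prod_congr rfl fun u _ => (WJaux.Phi_some D π u).symm
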